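/- Let (X,Y) be a BLM pair with parameter θ > 0 and joint survival function H̄, and assume the marginal survival functions F̄, Ḡ are strictly positive on [0,∞). Then H̄ is TP₂ on (0,∞)×(0,∞) if and only if both marginals are IFR (i.e., x ↦ −log F̄(x) and x ↦ −log Ḡ(x) are convex on [0,∞)) and F̄(x)·Ḡ(x) ≤ e^{−θx} for all x ≥ 0. -/

import Mathlib

open MeasureTheory Real Set

/-- Marginal survival function `x ↦ P(X > x)`. -/
def survival {Ω : Type*} [MeasurableSpace Ω] (μ : Measure Ω) (X : Ω → ℝ) (x : ℝ) : ℝ :=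
  (μ {ω | x < X ω}).toReal

/-- Joint survival function `(x,y) ↦ P(X > x, Y > y)`. -/
def jointSurvival {Ω : Type*} [MeasurableSpace Ω] (μ : Measure Ω) (X Y : Ω → ℝ) (x y : ℝ) : ℝ :=
  (μ {ω | x < X ω ∧ y < Y ω}).toReal

/-- `(X,Y)` is a BLM pair with parameter `θ > 0`. -/
def IsBLM {Ω : Type*} [MeasurableSpace Ω] (μ : Measure Ω) (X Y : Ω → ℝ) (θ : ℝ) : Prop :=
  0 < θ ∧ μ {ω | 0 < X ω} = 1 ∧ μ {ω | 0 < Y ω} = 1 ∧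
  (∀ x y : ℝ, 0 ≤ y → y ≤ x →
    jointSurvival μ X Y x y = Real.exp (-θ * y) * survival μ X (x - y)) ∧
  (∀ x y : ℝ, 0 ≤ x → x ≤ y →
    jointSurvival μ X Y x y = Real.exp (-θ * x) * survival μ Y (y - x))

/-- `K` is totally positive of order two on `S × T`. -/
def TP2 (K : ℝ → ℝ → ℝ) (S T : Set ℝ) : Prop :=
  ∀ x₁ ∈ S, ∀ x₂ ∈ S, ∀ y₁ ∈ T, ∀ y₂ ∈ T, x₁ < x₂ → y₁ < y₂ →
    K x₁ y₂ * K x₂ y₁ ≤ K x₁ y₁ * K x₂ y₂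

private lemma sum_prefix_le (d : ℕ → ℝ) (hd : Monotone d) {p q : ℕ} (hpq : p ≤ q) :
    (q : ℝ) * ∑ i ∈ Finset.range p, d i ≤ (p : ℝ) * ∑ i ∈ Finset.range q, d i := by
  have key : ∀ j, p ≤ j → ∑ i ∈ Finset.range p, d i ≤ (p : ℝ) * d j := by
    intro j hj
    calc ∑ i ∈ Finset.range p, d i ≤ ∑ _i ∈ Finset.range p, d j :=
          Finset.sum_le_sum fun i hi => hd ((Finset.mem_range.mp hi).le.trans hj)
      _ = (p : ℝ) * d j := by simp [mul_comm]
  have hsplit : ∑ i ∈ Finset.range p, d i + ∑ i ∈ Finset.Ico p q, d i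
      = ∑ i ∈ Finset.range q, d i := Finset.sum_range_add_sum_Ico d hpq
  have h2 : ((q - p : ℕ) : ℝ) * ∑ i ∈ Finset.range p, d i
      ≤ (p : ℝ) * ∑ i ∈ Finset.Ico p q, d i := by
    calc ((q - p : ℕ) : ℝ) * ∑ i ∈ Finset.range p, d i
        = ∑ _j ∈ Finset.Ico p q, ∑ i ∈ Finset.range p, d i := by
          simp [Finset.sum_const, Nat.card_Ico, mul_comm]
      _ ≤ ∑ j ∈ Finset.Ico p q, (p : ℝ) * d j :=
          Finset.sum_le_sum fun j hj => key j (Finset.mem_Ico.mp hj).1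
      _ = (p : ℝ) * ∑ j ∈ Finset.Ico p q, d j := by rw [Finset.mul_sum]
  have hc : ((q - p : ℕ) : ℝ) = (q : ℝ) - p := by
    push_cast [Nat.cast_sub hpq]; ring
  rw [hc] at h2
  nlinarith [h2, hsplit]

private lemma chord_aux (φ : ℝ → ℝ)
    (hmid : ∀ u v : ℝ, 0 ≤ u → u ≤ v → 2 * φ ((u + v) / 2) ≤ φ u + φ v)
    {x z : ℝ} (hx : 0 ≤ x) (hxz : x ≤ z) (p q : ℕ) (hpq : p ≤ q) (hq : 0 < q) :
    (q : ℝ) * (φ (x + ((p : ℝ) / q) * (z - x)) - φ x) ≤ (p : ℝ) * (φ z - φ x) := by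
  set h : ℝ := (z - x) / q with hh
  have hh0 : 0 ≤ h := div_nonneg (by linarith) (by positivity)
  set f : ℕ → ℝ := fun i => φ (x + i * h) with hf
  have hd : Monotone fun i => f (i + 1) - f i := by
    apply monotone_nat_of_le_succ
    intro i
    have hu : 0 ≤ x + i * h := by positivity
    have huv : x + i * h ≤ x + (i + 2) * h := by nlinarith
    have hm := hmid (x + i * h) (x + (i + 2) * h) hu huv
    have harg : (x + i * h + (x + (i + 2) * h)) / 2 = x + (i + 1) * h := by ring
    rw [harg] at hm
    simp only [hf]
    push_cast
    have e1 : x + (↑i + 1 + 1) * h = x + (↑i + 2) * h := by ring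
    rw [e1]
    linarith
  have tel : ∀ n : ℕ, ∑ i ∈ Finset.range n, (f (i + 1) - f i) = f n - f 0 :=
    fun n => Finset.sum_range_sub f n
  have main := sum_prefix_le _ hd hpq
  rw [tel, tel] at main
  have hf0 : f 0 = φ x := by simp [hf]
  have hq' : (q : ℝ) ≠ 0 := by positivity
  have hfq : f q = φ z := by
    simp only [hf, hh]
    congr 1
    field_simp
    ring
  have hfp : f p = φ (x + ((p : ℝ) / q) * (z - x)) := by
    simp only [hf, hh]
    congr 1
    field_simp
  rw [hf0, hfq, hfp] at main
  exact main

private lemma convexOn_of_mono_midpoint (φ : ℝ → ℝ)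
    (hmono : ∀ a b : ℝ, 0 ≤ a → a ≤ b → φ a ≤ φ b)
    (hmid : ∀ u v : ℝ, 0 ≤ u → u ≤ v → 2 * φ ((u + v) / 2) ≤ φ u + φ v) :
    ConvexOn ℝ (Ici 0) φ := by
  have claim : ∀ x z b : ℝ, 0 ≤ x → x ≤ z → 0 ≤ b → b ≤ 1 →
      φ (x + b * (z - x)) ≤ φ x + b * (φ z - φ x) := by
    intro x z b hx hxz hb0 hb1
    rcases eq_or_lt_of_le hxz with rfl | hlt
    · simp
    rcases eq_or_lt_of_le hb1 with rfl | hb1'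
    · have e : x + 1 * (z - x) = z := by ring
      rw [e]; linarith
    rcases eq_or_lt_of_le hb0 with rfl | hb0'
    · simp
    have hD : 0 ≤ φ z - φ x := by
      have := hmono x z hx hxz; linarith
    refine le_of_forall_pos_le_add fun ε hε => ?_
    set D := φ z - φ x with hDdef
    have hD1 : (0:ℝ) < D + 1 := by linarith
    set δ := ε / (D + 1) with hδ
    have hδ0 : 0 < δ := by positivity
    have hbm : b < min 1 (b + δ) := lt_min hb1' (by linarith)
    obtain ⟨r, hr1, hr2⟩ := exists_rat_btwn hbm
    have hr2' : (r : ℝ) < 1 := lt_of_lt_of_le hr2 (min_le_left _ _)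
    have hr2'' : (r : ℝ) < b + δ := lt_of_lt_of_le hr2 (min_le_right _ _)
    have hr0 : 0 < r := by
      have h0 : (0 : ℝ) < (r:ℝ) := lt_of_le_of_lt hb0 hr1
      exact_mod_cast h0
    have hrlt1 : r < 1 := by exact_mod_cast hr2'
    have hnum : 0 < r.num := Rat.num_pos.mpr hr0
    set p := r.num.toNat with hp
    set q := r.den with hq
    have hq0 : 0 < q := r.pos
    have hq0' : (0:ℝ) < (q:ℝ) := by exact_mod_cast hq0
    have hpcast : (p : ℝ) = (r.num : ℝ) := by
      rw [hp]
      have := Int.toNat_of_nonneg hnum.le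
      exact_mod_cast congrArg (fun n : ℤ => (n : ℝ)) this
    have hrcast : (r : ℝ) = (p : ℝ) / q := by
      rw [hpcast, hq, Rat.cast_def]
    have hpq : p ≤ q := by
      have h1 := Rat.lt_one_iff_num_lt_denom.mpr hrlt1
      omega
    have step1 : φ (x + (r : ℝ) * (z - x)) ≤ φ x + (r:ℝ) * D := by
      have hc := chord_aux φ hmid hx (le_of_lt hlt) p q hpq hq0
      rw [← hrcast] at hc
      have hpr : (p : ℝ) = (r:ℝ) * q := by rw [hrcast]; field_simp
      rw [hpr] at hc
      nlinarith [hc, hq0']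
    have mono1 : φ (x + b * (z - x)) ≤ φ (x + (r:ℝ) * (z - x)) := by
      apply hmono
      · nlinarith
      · nlinarith [hr1]
    have final : (r:ℝ) * D ≤ b * D + ε := by
      have h1 : ((r:ℝ) - b) * D ≤ δ * D := by
        apply mul_le_mul_of_nonneg_right _ hD; linarith
      have h2 : δ * D ≤ δ * (D + 1) := by nlinarith
      have h3 : δ * (D + 1) = ε := by rw [hδ]; field_simp
      nlinarith
    linarith [mono1, step1, final]
  constructor
  · exact convex_Ici 0
  intro x hx z hz a b ha hb hab
  simp only [smul_eq_mul, mem_Ici] at *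
  rcases le_total x z with hxz | hzx
  · have key := claim x z b hx hxz hb (by linarith)
    have ha' : a = 1 - b := by linarith
    subst ha'
    have e : (1 - b) * x + b * z = x + b * (z - x) := by ring
    rw [e]
    linarith
  · have key := claim z x a hz hzx ha (by linarith)
    have hb' : b = 1 - a := by linarith
    subst hb'
    have e : a * x + (1 - a) * z = z + a * (x - z) := by ring
    rw [e]
    linarith

private lemma superadd_of_convex (φ : ℝ → ℝ) (hconv : ConvexOn ℝ (Ici 0) φ) (h0 : φ 0 ≤ 0)
    (a b c : ℝ) (ha : 0 ≤ a) (hb : 0 ≤ b) (hc : a + b = c) : φ a + φ b ≤ φ c := by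
  rcases eq_or_lt_of_le (show (0:ℝ) ≤ c by linarith) with rfl | hcpos
  · have ha0 : a = 0 := by linarith
    have hb0 : b = 0 := by linarith
    subst ha0; subst hb0; linarith
  · have hmem0 : (0:ℝ) ∈ Ici (0:ℝ) := mem_Ici.mpr le_rfl
    have hmemc : c ∈ Ici (0:ℝ) := mem_Ici.mpr hcpos.le
    have hsum : b / c + a / c = 1 := by field_simp; linarith
    have h1 := hconv.2 hmem0 hmemc (div_nonneg hb hcpos.le) (div_nonneg ha hcpos.le) hsum
    have e1 : (b/c) • (0:ℝ) + (a/c) • c = a := by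
      simp only [smul_eq_mul, mul_zero, zero_add]
      field_simp
    rw [e1] at h1
    have hsum2 : a / c + b / c = 1 := by linarith
    have h2 := hconv.2 hmem0 hmemc (div_nonneg ha hcpos.le) (div_nonneg hb hcpos.le) hsum2
    have e2 : (a/c) • (0:ℝ) + (b/c) • c = b := by
      simp only [smul_eq_mul, mul_zero, zero_add]
      field_simp
    rw [e2] at h2
    simp only [smul_eq_mul] at h1 h2
    have e3 : (b/c) * φ 0 + (a/c) * φ 0 = φ 0 := by
      rw [← add_mul, hsum, one_mul]
    have e4 : (a/c) * φ c + (b/c) * φ c = φ c := by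
      rw [← add_mul, hsum2, one_mul]
    linarith

private lemma wright_of_convex (φ : ℝ → ℝ) (hconv : ConvexOn ℝ (Ici 0) φ)
    (a b c d : ℝ) (hc : 0 ≤ c) (hca : c ≤ a) (had : a ≤ d) (habcd : a + b = c + d) :
    φ a + φ b ≤ φ c + φ d := by
  rcases eq_or_lt_of_le (hca.trans had) with heq | hcd
  · have h1 : a = c := le_antisymm (by linarith) hca
    have h2 : b = d := by linarith
    rw [h1, h2]
  · set t := (d - a) / (d - c) with ht
    have hdc : (0:ℝ) < d - c := by linarith
    have ht0 : 0 ≤ t := div_nonneg (by linarith) hdc.le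
    have ht1 : t ≤ 1 := by rw [div_le_one hdc]; linarith
    have hmemc : c ∈ Ici (0:ℝ) := mem_Ici.mpr hc
    have hmemd : d ∈ Ici (0:ℝ) := by simp only [mem_Ici]; linarith
    have h1 := hconv.2 hmemc hmemd ht0 (by linarith : (0:ℝ) ≤ 1 - t) (by ring)
    have h2 := hconv.2 hmemc hmemd (by linarith : (0:ℝ) ≤ 1 - t) ht0 (by ring)
    have e1 : t • c + (1 - t) • d = a := by
      simp only [smul_eq_mul, ht]
      field_simp
      ring
    have e2 : (1 - t) • c + t • d = b := by
      have hbv : b = c + d - a := by linarith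
      simp only [smul_eq_mul, ht, hbv]
      field_simp
      ring
    rw [e1] at h1
    rw [e2] at h2
    simp only [smul_eq_mul] at h1 h2
    nlinarith [h1, h2]

theorem blm_survival_tp2_iff {Ω : Type*} [MeasurableSpace Ω] (μ : Measure Ω)
    [IsProbabilityMeasure μ] (X Y : Ω → ℝ) (hX : Measurable X) (hY : Measurable Y)
    (θ : ℝ) (hBLM : IsBLM μ X Y θ)
    (hFpos : ∀ x : ℝ, 0 ≤ x → 0 < survival μ X x)
    (hGpos : ∀ x : ℝ, 0 ≤ x → 0 < survival μ Y x) :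
    TP2 (jointSurvival μ X Y) (Ioi 0) (Ioi 0) ↔
      (ConvexOn ℝ (Ici 0) (fun x => -Real.log (survival μ X x)) ∧
        ConvexOn ℝ (Ici 0) (fun x => -Real.log (survival μ Y x)) ∧
        ∀ x : ℝ, 0 ≤ x → survival μ X x * survival μ Y x ≤ Real.exp (-θ * x)) := by
  obtain ⟨hθ, hX1, hY1, hXY, hYX⟩ := hBLM
  have F0 : survival μ X 0 = 1 := by rw [survival, hX1, ENNReal.toReal_one]
  have G0 : survival μ Y 0 = 1 := by rw [survival, hY1, ENNReal.toReal_one]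
  have Fanti : ∀ a b : ℝ, a ≤ b → survival μ X b ≤ survival μ X a := by
    intro a b hab
    exact ENNReal.toReal_mono (measure_ne_top μ _)
      (measure_mono fun ω hω => lt_of_le_of_lt hab hω)
  have Ganti : ∀ a b : ℝ, a ≤ b → survival μ Y b ≤ survival μ Y a := by
    intro a b hab
    exact ENNReal.toReal_mono (measure_ne_top μ _)
      (measure_mono fun ω hω => lt_of_le_of_lt hab hω)
  constructor
  · intro hT
    refine ⟨?_, ?_, ?_⟩
    · -- convexity of -log F̄
      apply convexOn_of_mono_midpoint
      · intro a b ha hab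
        have h := Real.log_le_log (hFpos b (ha.trans hab)) (Fanti a b hab)
        linarith
      · intro u v hu huv
        rcases eq_or_lt_of_le huv with rfl | huv'
        · have e : (u + u) / 2 = u := by ring
          rw [e]; linarith
        · have hv : 0 ≤ v := hu.trans huv
          have hm0 : 0 ≤ (u + v) / 2 := by linarith
          have key := hT ((u+v)/2 + 1) (by simp only [mem_Ioi]; linarith)
            (v + 1) (by simp only [mem_Ioi]; linarith)
            1 (by simp only [mem_Ioi]; norm_num)
            (1 + (v - u)/2) (by simp only [mem_Ioi]; linarith)
            (by linarith) (by linarith)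
          rw [hXY ((u+v)/2 + 1) (1 + (v-u)/2) (by linarith) (by linarith),
              hXY (v+1) 1 (by norm_num) (by linarith),
              hXY ((u+v)/2 + 1) 1 (by norm_num) (by linarith),
              hXY (v+1) (1 + (v-u)/2) (by linarith) (by linarith)] at key
          have e1 : (u+v)/2 + 1 - 1 = (u+v)/2 := by ring
          have e2 : (u+v)/2 + 1 - (1 + (v-u)/2) = u := by ring
          have e3 : v + 1 - 1 = v := by ring
          have e4 : v + 1 - (1 + (v-u)/2) = (u+v)/2 := by ring
          rw [e1, e2, e3, e4] at key
          have hFu := hFpos u hu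
          have hFv := hFpos v hv
          have hFm := hFpos ((u+v)/2) hm0
          have hE : (0:ℝ) < Real.exp (-θ * 1) * Real.exp (-θ * (1 + (v-u)/2)) := by positivity
          have key2 : (Real.exp (-θ * 1) * Real.exp (-θ * (1 + (v-u)/2)))
                * (survival μ X u * survival μ X v)
              ≤ (Real.exp (-θ * 1) * Real.exp (-θ * (1 + (v-u)/2)))
                * (survival μ X ((u+v)/2) * survival μ X ((u+v)/2)) := by
            nlinarith [key]
          have hmul := le_of_mul_le_mul_left key2 hE
          have hlog := Real.log_le_log (by positivity) hmul
          rw [Real.log_mul hFu.ne' hFv.ne', Real.log_mul hFm.ne' hFm.ne'] at hlog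
          linarith
    · -- convexity of -log Ḡ
      apply convexOn_of_mono_midpoint
      · intro a b ha hab
        have h := Real.log_le_log (hGpos b (ha.trans hab)) (Ganti a b hab)
        linarith
      · intro u v hu huv
        rcases eq_or_lt_of_le huv with rfl | huv'
        · have e : (u + u) / 2 = u := by ring
          rw [e]; linarith
        · have hv : 0 ≤ v := hu.trans huv
          have hm0 : 0 ≤ (u + v) / 2 := by linarith
          have key := hT 1 (by simp only [mem_Ioi]; norm_num)
            (1 + (v - u)/2) (by simp only [mem_Ioi]; linarith)
            ((u+v)/2 + 1) (by simp only [mem_Ioi]; linarith)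
            (v + 1) (by simp only [mem_Ioi]; linarith)
            (by linarith) (by linarith)
          rw [hYX 1 (v+1) (by norm_num) (by linarith),
              hYX (1 + (v-u)/2) ((u+v)/2 + 1) (by linarith) (by linarith),
              hYX 1 ((u+v)/2 + 1) (by norm_num) (by linarith),
              hYX (1 + (v-u)/2) (v+1) (by linarith) (by linarith)] at key
          have e1 : v + 1 - 1 = v := by ring
          have e2 : (u+v)/2 + 1 - (1 + (v-u)/2) = u := by ring
          have e3 : (u+v)/2 + 1 - 1 = (u+v)/2 := by ring
          have e4 : v + 1 - (1 + (v-u)/2) = (u+v)/2 := by ring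
          rw [e1, e2, e3, e4] at key
          have hGu := hGpos u hu
          have hGv := hGpos v hv
          have hGm := hGpos ((u+v)/2) hm0
          have hE : (0:ℝ) < Real.exp (-θ * 1) * Real.exp (-θ * (1 + (v-u)/2)) := by positivity
          have key2 : (Real.exp (-θ * 1) * Real.exp (-θ * (1 + (v-u)/2)))
                * (survival μ Y u * survival μ Y v)
              ≤ (Real.exp (-θ * 1) * Real.exp (-θ * (1 + (v-u)/2)))
                * (survival μ Y ((u+v)/2) * survival μ Y ((u+v)/2)) := by
            nlinarith [key]
          have hmul := le_of_mul_le_mul_left key2 hE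
          have hlog := Real.log_le_log (by positivity) hmul
          rw [Real.log_mul hGu.ne' hGv.ne', Real.log_mul hGm.ne' hGm.ne'] at hlog
          linarith
    · -- product bound
      intro t ht
      rcases eq_or_lt_of_le ht with rfl | ht'
      · simp [F0, G0]
      · have key := hT 1 (by simp only [mem_Ioi]; norm_num)
          (t + 1) (by simp only [mem_Ioi]; linarith)
          1 (by simp only [mem_Ioi]; norm_num)
          (t + 1) (by simp only [mem_Ioi]; linarith)
          (by linarith) (by linarith)
        rw [hYX 1 (t+1) (by norm_num) (by linarith),
            hXY (t+1) 1 (by norm_num) (by linarith),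
            hXY 1 1 (by norm_num) le_rfl,
            hXY (t+1) (t+1) (by linarith) le_rfl] at key
        have e1 : t + 1 - 1 = t := by ring
        have e2 : (1:ℝ) - 1 = 0 := by norm_num
        have e3 : t + 1 - (t+1) = 0 := by ring
        rw [e1, e2, e3, F0] at key
        have expand : Real.exp (-θ*(t+1)) = Real.exp (-θ*t) * Real.exp (-θ*1) := by
          rw [← Real.exp_add]; congr 1; ring
        rw [expand] at key
        have hE : (0:ℝ) < Real.exp (-θ*1) * Real.exp (-θ*1) := by positivity
        have key2 : (Real.exp (-θ*1) * Real.exp (-θ*1)) * (survival μ X t * survival μ Y t)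
            ≤ (Real.exp (-θ*1) * Real.exp (-θ*1)) * Real.exp (-θ*t) := by
          nlinarith [key]
        exact le_of_mul_le_mul_left key2 hE
  · rintro ⟨hcF, hcG, hprod⟩
    have hFexp : ∀ s : ℝ, 0 ≤ s → survival μ X s = Real.exp (Real.log (survival μ X s)) :=
      fun s hs => (Real.exp_log (hFpos s hs)).symm
    have hGexp : ∀ s : ℝ, 0 ≤ s → survival μ Y s = Real.exp (Real.log (survival μ Y s)) :=
      fun s hs => (Real.exp_log (hGpos s hs)).symm
    have hF0 : (fun x => -Real.log (survival μ X x)) 0 ≤ 0 := by simp [F0]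
    have hG0 : (fun x => -Real.log (survival μ Y x)) 0 ≤ 0 := by simp [G0]
    have hθle : ∀ t : ℝ, 0 ≤ t →
        θ * t ≤ -Real.log (survival μ X t) + -Real.log (survival μ Y t) := by
      intro t ht
      have h1 := hprod t ht
      have h2 := Real.log_le_log (mul_pos (hFpos t ht) (hGpos t ht)) h1
      rw [Real.log_mul (hFpos t ht).ne' (hGpos t ht).ne', Real.log_exp] at h2
      linarith
    intro x₁ hx₁ x₂ hx₂ y₁ hy₁ y₂ hy₂ hx12 hy12
    simp only [mem_Ioi] at hx₁ hx₂ hy₁ hy₂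
    rcases le_total y₁ x₁ with hc1 | hc1 <;> rcases le_total y₂ x₂ with hc2 | hc2
    · -- y₁ ≤ x₁, y₂ ≤ x₂ : cases A / E
      rcases le_total y₂ x₁ with hA | hE
      · -- case A : all in F-region
        rw [hXY x₁ y₂ hy₂.le hA, hXY x₂ y₁ hy₁.le (by linarith),
            hXY x₁ y₁ hy₁.le hc1, hXY x₂ y₂ hy₂.le hc2]
        rw [hFexp (x₁ - y₂) (by linarith), hFexp (x₂ - y₁) (by linarith),
            hFexp (x₁ - y₁) (by linarith), hFexp (x₂ - y₂) (by linarith)]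
        simp only [← Real.exp_add]
        rw [Real.exp_le_exp]
        have w : -Real.log (survival μ X (x₁ - y₁)) + -Real.log (survival μ X (x₂ - y₂))
            ≤ -Real.log (survival μ X (x₁ - y₂)) + -Real.log (survival μ X (x₂ - y₁)) :=
          wright_of_convex _ hcF (x₁ - y₁) (x₂ - y₂) (x₁ - y₂) (x₂ - y₁)
            (by linarith) (by linarith) (by linarith) (by ring)
        linarith
      · -- case E : only (x₁,y₂) in G-region
        rw [hYX x₁ y₂ hx₁.le hE, hXY x₂ y₁ hy₁.le (by linarith),
            hXY x₁ y₁ hy₁.le hc1, hXY x₂ y₂ hy₂.le hc2]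
        rw [hGexp (y₂ - x₁) (by linarith), hFexp (x₂ - y₁) (by linarith),
            hFexp (x₁ - y₁) (by linarith), hFexp (x₂ - y₂) (by linarith)]
        simp only [← Real.exp_add]
        rw [Real.exp_le_exp]
        have s1 : -Real.log (survival μ X (y₂ - x₁)) + -Real.log (survival μ X (x₁ - y₁))
            ≤ -Real.log (survival μ X (y₂ - y₁)) :=
          superadd_of_convex _ hcF hF0 (y₂ - x₁) (x₁ - y₁) (y₂ - y₁)
            (by linarith) (by linarith) (by ring)
        have s2 : -Real.log (survival μ X (y₂ - y₁)) + -Real.log (survival μ X (x₂ - y₂))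
            ≤ -Real.log (survival μ X (x₂ - y₁)) :=
          superadd_of_convex _ hcF hF0 (y₂ - y₁) (x₂ - y₂) (x₂ - y₁)
            (by linarith) (by linarith) (by ring)
        have p1 := hθle (y₂ - x₁) (by linarith)
        linarith
    · -- case D : y₁ ≤ x₁, x₂ ≤ y₂
      rw [hYX x₁ y₂ hx₁.le (by linarith), hXY x₂ y₁ hy₁.le (by linarith),
          hXY x₁ y₁ hy₁.le hc1, hYX x₂ y₂ hx₂.le hc2]
      rw [hGexp (y₂ - x₁) (by linarith), hFexp (x₂ - y₁) (by linarith),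
          hFexp (x₁ - y₁) (by linarith), hGexp (y₂ - x₂) (by linarith)]
      simp only [← Real.exp_add]
      rw [Real.exp_le_exp]
      have s1 : -Real.log (survival μ X (x₁ - y₁)) + -Real.log (survival μ X (x₂ - x₁))
          ≤ -Real.log (survival μ X (x₂ - y₁)) :=
        superadd_of_convex _ hcF hF0 (x₁ - y₁) (x₂ - x₁) (x₂ - y₁)
          (by linarith) (by linarith) (by ring)
      have s2 : -Real.log (survival μ Y (y₂ - x₂)) + -Real.log (survival μ Y (x₂ - x₁))
          ≤ -Real.log (survival μ Y (y₂ - x₁)) :=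
        superadd_of_convex _ hcG hG0 (y₂ - x₂) (x₂ - x₁) (y₂ - x₁)
          (by linarith) (by linarith) (by ring)
      have p1 := hθle (x₂ - x₁) (by linarith)
      linarith
    · -- case C : x₁ ≤ y₁, y₂ ≤ x₂
      rw [hYX x₁ y₂ hx₁.le (by linarith), hXY x₂ y₁ hy₁.le (by linarith),
          hYX x₁ y₁ hx₁.le hc1, hXY x₂ y₂ hy₂.le hc2]
      rw [hGexp (y₂ - x₁) (by linarith), hFexp (x₂ - y₁) (by linarith),
          hGexp (y₁ - x₁) (by linarith), hFexp (x₂ - y₂) (by linarith)]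
      simp only [← Real.exp_add]
      rw [Real.exp_le_exp]
      have s1 : -Real.log (survival μ Y (y₁ - x₁)) + -Real.log (survival μ Y (y₂ - y₁))
          ≤ -Real.log (survival μ Y (y₂ - x₁)) :=
        superadd_of_convex _ hcG hG0 (y₁ - x₁) (y₂ - y₁) (y₂ - x₁)
          (by linarith) (by linarith) (by ring)
      have s2 : -Real.log (survival μ X (x₂ - y₂)) + -Real.log (survival μ X (y₂ - y₁))
          ≤ -Real.log (survival μ X (x₂ - y₁)) :=
        superadd_of_convex _ hcF hF0 (x₂ - y₂) (y₂ - y₁) (x₂ - y₁)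
          (by linarith) (by linarith) (by ring)
      have p1 := hθle (y₂ - y₁) (by linarith)
      linarith
    · -- x₁ ≤ y₁, x₂ ≤ y₂ : cases B / F
      rcases le_total x₂ y₁ with hB | hF
      · -- case B : all in G-region
        rw [hYX x₁ y₂ hx₁.le (by linarith), hYX x₂ y₁ hx₂.le hB,
            hYX x₁ y₁ hx₁.le hc1, hYX x₂ y₂ hx₂.le hc2]
        rw [hGexp (y₂ - x₁) (by linarith), hGexp (y₁ - x₂) (by linarith),
            hGexp (y₁ - x₁) (by linarith), hGexp (y₂ - x₂) (by linarith)]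
        simp only [← Real.exp_add]
        rw [Real.exp_le_exp]
        have w : -Real.log (survival μ Y (y₁ - x₁)) + -Real.log (survival μ Y (y₂ - x₂))
            ≤ -Real.log (survival μ Y (y₁ - x₂)) + -Real.log (survival μ Y (y₂ - x₁)) :=
          wright_of_convex _ hcG (y₁ - x₁) (y₂ - x₂) (y₁ - x₂) (y₂ - x₁)
            (by linarith) (by linarith) (by linarith) (by ring)
        linarith
      · -- case F : only (x₂,y₁) in F-region
        rw [hYX x₁ y₂ hx₁.le (by linarith), hXY x₂ y₁ hy₁.le hF,
            hYX x₁ y₁ hx₁.le hc1, hYX x₂ y₂ hx₂.le hc2]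
        rw [hGexp (y₂ - x₁) (by linarith), hFexp (x₂ - y₁) (by linarith),
            hGexp (y₁ - x₁) (by linarith), hGexp (y₂ - x₂) (by linarith)]
        simp only [← Real.exp_add]
        rw [Real.exp_le_exp]
        have s1 : -Real.log (survival μ Y (y₁ - x₁)) + -Real.log (survival μ Y (x₂ - y₁))
            ≤ -Real.log (survival μ Y (x₂ - x₁)) :=
          superadd_of_convex _ hcG hG0 (y₁ - x₁) (x₂ - y₁) (x₂ - x₁)
            (by linarith) (by linarith) (by ring)
        have s2 : -Real.log (survival μ Y (x₂ - x₁)) + -Real.log (survival μ Y (y₂ - x₂))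
            ≤ -Real.log (survival μ Y (y₂ - x₁)) :=
          superadd_of_convex _ hcG hG0 (x₂ - x₁) (y₂ - x₂) (y₂ - x₁)
            (by linarith) (by linarith) (by ring)
        have p1 := hθle (x₂ - y₁) (by linarith)
        linarith
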